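/- Let g be a Riemannian metric on an open set of ℝⁿ and g̃ = DgD with D = diag(1,…,1,−1) (flipping signs of the mixed last-index entries). For the Hodge star operators ⋆ and ⋆̃ associated to g and g̃ with the standard orientation, and a k-form ω with reflected form ω̃ obtained by multiplying components containing the index n by −1, one has (⋆̃ω̃)_{i₁…i_{n−k}} = (⋆ω)_{i₁…i_{n−k}} if some index equals n, and (⋆̃ω̃)_{i₁…i_{n−k}} = −(⋆ω)_{i₁…i_{n−k}} if no index equals n. -/
import Mathlib


/-- The Levi-Civita symbol `ε_{v 0 … v (N−1)}`: the sign of `v` if `v` is a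
permutation of the indices, and `0` otherwise. -/
noncomputable def levi (N : ℕ) (v : Fin N → Fin N) : ℝ :=
  if h : Function.Bijective v then (Equiv.Perm.sign (Equiv.ofBijective v h) : ℤ) else 0

/-- The components of the Hodge star of a `k`-form `ω` (given by its components on all
`k`-tuples of indices) in dimension `n = k + m` with respect to the symmetric positive
definite matrix `g`: `(⋆ω)_J = (√det g / k!) Σ_{I,L} ω_I (Π_l g^{I_l L_l}) ε_{L J}`,
where `g^{ij}` are the entries of `g⁻¹` and `ε` is the Levi-Civita symbol. -/
noncomputable def hodgeComp (k m : ℕ) (g : Matrix (Fin (k + m)) (Fin (k + m)) ℝ)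
    (ω : (Fin k → Fin (k + m)) → ℝ) (J : Fin m → Fin (k + m)) : ℝ :=
  (Real.sqrt g.det / (k.factorial : ℝ)) *
    ∑ I : Fin k → Fin (k + m), ∑ L : Fin k → Fin (k + m),
      ω I * (∏ l : Fin k, g⁻¹ (I l) (L l)) * levi (k + m) (Fin.append L J)

/-- pointwise identity, in dimension `n = k + (m+1)`, for the Hodge star
operators `⋆` and `⋆̃` of `g` and `g̃ = D g D`, `D = diag(1,…,1,−1)` (standard
orientation), applied to an (alternating) `k`-form `ω` and its reflection `ω̃`
(components containing the index `n` multiplied by `−1`): `(⋆̃ω̃)_J = (⋆ω)_J` if some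
index of `J` equals `n`, and `(⋆̃ω̃)_J = −(⋆ω)_J` if no index of `J` equals `n`. -/

lemma prod_if_eq {n k : ℕ} (x₀ : Fin n) (I : Fin k → Fin n) (hI : Function.Injective I) :
    (∏ l : Fin k, (if I l = x₀ then (-1:ℝ) else 1)) =
      if ∃ l, I l = x₀ then (-1:ℝ) else 1 := by
  by_cases h : ∃ l, I l = x₀
  · obtain ⟨l₀, h₀⟩ := h
    rw [if_pos ⟨l₀, h₀⟩, Finset.prod_eq_single l₀]
    · simp [h₀]
    · intro b _ hb
      have : I b ≠ x₀ := fun hbx => hb (hI (hbx.trans h₀.symm))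
      simp [this]
    · simp
  · rw [if_neg h]
    apply Finset.prod_eq_one
    intro l _
    have : I l ≠ x₀ := fun hl => h ⟨l, hl⟩
    simp [this]

lemma omega_zero {n k : ℕ} (ω : (Fin k → Fin n) → ℝ)
    (halt : ∀ (I : Fin k → Fin n) (σ : Equiv.Perm (Fin k)),
      ω (I ∘ σ) = ((Equiv.Perm.sign σ : ℤ) : ℝ) * ω I)
    (I : Fin k → Fin n) (h : ¬ Function.Injective I) : ω I = 0 := by
  rw [Function.Injective] at h
  push_neg at h
  obtain ⟨i, j, hij, hne⟩ := h
  have hcomp : I ∘ (Equiv.swap i j) = I := by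
    funext x
    simp only [Function.comp_apply, Equiv.swap_apply_def]
    split_ifs with h1 h2 <;> simp_all
  have hs := halt I (Equiv.swap i j)
  rw [hcomp, Equiv.Perm.sign_swap hne] at hs
  push_cast at hs
  linarith

lemma sum_scale {α β : Type*} [Fintype α] [Fintype β] (A c : ℝ) (f h : α → β → ℝ)
    (hfh : ∀ I L, f I L = c * h I L) :
    A * ∑ I, ∑ L, f I L = c * (A * ∑ I, ∑ L, h I L) := by
  simp only [hfh, ← Finset.mul_sum]; ring

lemma alg (s p a b c e : ℝ) (h1 : s * p = 1) :
    (s * a) * (p * b * c) * e = c * (a * b * e) := by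
  linear_combination (a * b * c * e) * h1


theorem stmt15 (k m : ℕ) (g : Matrix (Fin (k + m + 1)) (Fin (k + m + 1)) ℝ)
    (hpos : g.PosDef)
    (D : Matrix (Fin (k + m + 1)) (Fin (k + m + 1)) ℝ)
    (hD : D = Matrix.diagonal fun i => if i = Fin.last (k + m) then (-1 : ℝ) else 1)
    (ω : (Fin k → Fin (k + m + 1)) → ℝ)
    (halt : ∀ (I : Fin k → Fin (k + m + 1)) (σ : Equiv.Perm (Fin k)),
      ω (I ∘ σ) = ((Equiv.Perm.sign σ : ℤ) : ℝ) * ω I) :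
    ∀ J : Fin (m + 1) → Fin (k + m + 1),
      hodgeComp k (m + 1) (D * g * D)
        (fun I => (if ∃ l, I l = Fin.last (k + m) then (-1 : ℝ) else 1) * ω I) J =
      (if ∃ l, J l = Fin.last (k + m) then (1 : ℝ) else -1) * hodgeComp k (m + 1) g ω J := by
  intro J
  have hDD : D * D = 1 := by
    rw [hD, Matrix.diagonal_mul_diagonal]
    ext i j
    rcases eq_or_ne i j with hij | hij
    · subst hij
      rcases eq_or_ne i (Fin.last (k + m)) with hi | hi <;>
        simp [Matrix.diagonal_apply_eq, Matrix.one_apply_eq, hi]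
    · simp [Matrix.diagonal_apply_ne _ hij, Matrix.one_apply_ne hij]
  have hDinv : D⁻¹ = D := Matrix.inv_eq_right_inv hDD
  have hdet : (D * g * D).det = g.det := by
    rw [Matrix.det_mul, Matrix.det_mul]
    have h1 : D.det * D.det = 1 := by rw [← Matrix.det_mul, hDD, Matrix.det_one]
    linear_combination g.det * h1
  have hinv : (D * g * D)⁻¹ = D * g⁻¹ * D := by
    rw [Matrix.mul_inv_rev, Matrix.mul_inv_rev, hDinv, Matrix.mul_assoc]
  have hentry : ∀ i j, (D * g * D)⁻¹ i j =
      (if i = Fin.last (k + m) then (-1:ℝ) else 1) * g⁻¹ i j *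
        (if j = Fin.last (k + m) then (-1:ℝ) else 1) := by
    intro i j
    rw [hinv, hD, Matrix.mul_diagonal, Matrix.diagonal_mul]
  have key : ∀ I L : Fin k → Fin (k + (m + 1)),
      ((if ∃ l, I l = Fin.last (k + m) then (-1:ℝ) else 1) * ω I) *
        (∏ l : Fin k, (D * g * D)⁻¹ (I l) (L l)) * levi (k + (m + 1)) (Fin.append L J) =
      (if ∃ l, J l = Fin.last (k + m) then (1:ℝ) else -1) *
        (ω I * (∏ l : Fin k, g⁻¹ (I l) (L l)) * levi (k + (m + 1)) (Fin.append L J)) := by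
    intro I L
    by_cases hI : Function.Injective I
    swap
    · rw [omega_zero ω halt I hI]; ring
    by_cases hB : Function.Bijective (Fin.append L J)
    swap
    · have hz : levi (k + (m + 1)) (Fin.append L J) = 0 := by
        unfold levi; rw [dif_neg hB]
      rw [hz]; ring
    have hprod : (∏ l : Fin k, (D * g * D)⁻¹ (I l) (L l)) =
        (∏ l : Fin k, (if I l = Fin.last (k + m) then (-1:ℝ) else 1)) *
          (∏ l : Fin k, g⁻¹ (I l) (L l)) *
          (∏ l : Fin k, (if L l = Fin.last (k + m) then (-1:ℝ) else 1)) := by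
      simp only [hentry]
      rw [Finset.prod_mul_distrib, Finset.prod_mul_distrib]
    have h1 : (if ∃ l, I l = Fin.last (k + m) then (-1:ℝ) else 1) *
        (∏ l : Fin k, (if I l = Fin.last (k + m) then (-1:ℝ) else 1)) = 1 := by
      rw [prod_if_eq (Fin.last (k + m)) I hI]
      by_cases h : ∃ l, I l = Fin.last (k + m) <;> simp [h]
    have hLinj : Function.Injective L := by
      intro a b hab
      have h2 : Fin.append L J (Fin.castAdd (m+1) a) = Fin.append L J (Fin.castAdd (m+1) b) := by
        rw [Fin.append_left, Fin.append_left, hab]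
      have hv := congrArg Fin.val (hB.1 h2)
      simp only [Fin.coe_castAdd] at hv
      exact Fin.ext hv
    have hne : ∀ (l : Fin k) (j : Fin (m+1)), Fin.castAdd (m+1) l ≠ Fin.natAdd k j := by
      intro l j h
      have hv := congrArg Fin.val h
      simp only [Fin.coe_castAdd, Fin.coe_natAdd] at hv
      have := l.isLt
      omega
    have h2 : (∏ l : Fin k, (if L l = Fin.last (k + m) then (-1:ℝ) else 1)) =
        (if ∃ l, J l = Fin.last (k + m) then (1:ℝ) else -1) := by
      rw [prod_if_eq (Fin.last (k + m)) L hLinj]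
      by_cases hJ : ∃ j, J j = Fin.last (k + m)
      · have hnL : ¬ ∃ l, L l = Fin.last (k + m) := by
          rintro ⟨l, hl⟩
          obtain ⟨j, hj⟩ := hJ
          have heq : Fin.append L J (Fin.castAdd (m+1) l) = Fin.append L J (Fin.natAdd k j) := by
            rw [Fin.append_left, Fin.append_right, hl, hj]
          exact hne l j (hB.1 heq)
        rw [if_pos hJ, if_neg hnL]
      · have hL : ∃ l, L l = Fin.last (k + m) := by
          obtain ⟨x, hx⟩ := hB.2 (Fin.last (k + m))
          refine Fin.addCases
            (motive := fun x => Fin.append L J x = Fin.last (k + m) →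
              ∃ l, L l = Fin.last (k + m)) ?_ ?_ x hx
          · intro l hl
            rw [Fin.append_left] at hl
            exact ⟨l, hl⟩
          · intro j hj
            rw [Fin.append_right] at hj
            exact absurd ⟨j, hj⟩ hJ
        rw [if_neg hJ, if_pos hL]
    rw [hprod, h2]
    exact alg _ _ _ _ _ _ h1
  unfold hodgeComp
  have hs := sum_scale (Real.sqrt g.det / (k.factorial : ℝ))
    (if ∃ l, J l = Fin.last (k + m) then (1:ℝ) else -1) _ _ key
  convert hs using 4
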